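/- If L is generic and reduced, then the simple graph on vertex set ℤ/nℤ in which two distinct elements u, v are adjacent exactly when {u,v} is a face of Tonn^{n,k}(L) is connected. -/

import Mathlib

/-- The maximal simplex `Δ(x;σ)` of the generalized Tonnetz `Tonn^{n,k}(L)`. -/
def tonnDelta (n k : ℕ) (L : Fin k → ℕ) (x : ZMod n) (σ : Equiv.Perm (Fin k)) :
    Finset (ZMod n) :=
  Finset.image
    (fun j : Fin k =>
      x + ((∑ i ∈ Finset.univ.filter (· < j), L (σ i) : ℕ) : ZMod n))
    Finset.univ

/-- A nonempty subset `S ⊆ ℤ/nℤ` is a face of `Tonn^{n,k}(L)` if `S ⊆ Δ(x;σ)`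
for some `x` and `σ`. -/
def IsTonnFace (n k : ℕ) (L : Fin k → ℕ) (S : Finset (ZMod n)) : Prop :=
  S.Nonempty ∧ ∃ (x : ZMod n) (σ : Equiv.Perm (Fin k)), S ⊆ tonnDelta n k L x σ

/-- `L` is generic: equal subset sums force equal subsets. -/
def TonnGeneric (k : ℕ) (L : Fin k → ℕ) : Prop :=
  ∀ I J : Finset (Fin k), (∑ i ∈ I, L i) = (∑ j ∈ J, L j) → I = J

/-- The 1-skeleton of `Tonn^{n,k}(L)`: the simple graph on `ℤ/nℤ` where two
distinct vertices are adjacent exactly when they form a 2-element face. -/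
def tonnGraph (n k : ℕ) (L : Fin k → ℕ) : SimpleGraph (ZMod n) where
  Adj u v := u ≠ v ∧ IsTonnFace n k L {u, v}
  symm := by
    constructor
    intro u v h
    exact ⟨h.1.symm, by rw [Finset.pair_comm]; exact h.2⟩
  loopless := by
    constructor
    intro u h
    exact h.1 rfl

lemma tonnAdj_translate (n k : ℕ) (L : Fin k → ℕ) (c u v : ZMod n)
    (h : (tonnGraph n k L).Adj u v) : (tonnGraph n k L).Adj (u + c) (v + c) := by
  obtain ⟨hne, _, x, σ, hsub⟩ := h
  have key : ∀ w, w ∈ tonnDelta n k L x σ → w + c ∈ tonnDelta n k L (x + c) σ := by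
    intro w hw
    simp only [tonnDelta, Finset.mem_image, Finset.mem_univ, true_and] at hw ⊢
    obtain ⟨j, hj⟩ := hw
    exact ⟨j, by rw [← hj]; ring⟩
  refine ⟨by simpa using hne, ⟨⟨u + c, by simp⟩, x + c, σ, ?_⟩⟩
  intro a ha
  rw [Finset.mem_insert, Finset.mem_singleton] at ha
  rcases ha with rfl | rfl
  · exact key u (hsub (by simp))
  · exact key v (hsub (by simp))

lemma tonnReach_translate (n k : ℕ) (L : Fin k → ℕ) (c u v : ZMod n)
    (h : (tonnGraph n k L).Reachable u v) :
    (tonnGraph n k L).Reachable (u + c) (v + c) := by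
  let f : tonnGraph n k L →g tonnGraph n k L :=
    ⟨fun z => z + c, fun h => tonnAdj_translate n k L c _ _ h⟩
  exact h.map f

lemma tonnAdj_step (n k : ℕ) (L : Fin k → ℕ) (i : Fin k) (x : ZMod n)
    (hk2 : 2 ≤ k) (hLi : ((L i : ℕ) : ZMod n) ≠ 0) :
    (tonnGraph n k L).Adj x (x + (L i : ZMod n)) := by
  have h0k : 0 < k := by omega
  have h1k : 1 < k := by omega
  set σ : Equiv.Perm (Fin k) := Equiv.swap ⟨0, h0k⟩ i with hσ
  have hf0 : Finset.univ.filter (· < (⟨0, h0k⟩ : Fin k)) = ∅ := by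
    ext m
    simp [Fin.lt_def]
  have hf1 : Finset.univ.filter (· < (⟨1, h1k⟩ : Fin k)) = {(⟨0, h0k⟩ : Fin k)} := by
    ext m
    simp only [Finset.mem_filter, Finset.mem_univ, true_and, Finset.mem_singleton,
      Fin.lt_def, Fin.ext_iff]
    omega
  constructor
  · intro h
    exact hLi (left_eq_add.mp h)
  · refine ⟨⟨x, by simp⟩, x, σ, ?_⟩
    intro a ha
    rw [Finset.mem_insert, Finset.mem_singleton] at ha
    simp only [tonnDelta, Finset.mem_image, Finset.mem_univ, true_and]
    rcases ha with rfl | rfl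
    · exact ⟨⟨0, h0k⟩, by rw [hf0]; simp⟩
    · refine ⟨⟨1, h1k⟩, ?_⟩
      rw [hf1, Finset.sum_singleton, hσ, Equiv.swap_apply_left]

theorem stmt_7 (n k : ℕ) (hn : 1 ≤ n) (hk : 1 ≤ k)
    (L : Fin k → ℕ) (hL : ∀ i, 0 < L i) (hsum : ∑ i, L i = n)
    (hgen : TonnGeneric k L) (hred : Finset.univ.gcd L = 1) :
    (tonnGraph n k L).Connected := by
  haveI : NeZero n := ⟨by omega⟩
  set G := tonnGraph n k L with hG
  -- the set of vertices reachable from 0 is an additive subgroup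
  let S : AddSubgroup (ZMod n) :=
    { carrier := {z | G.Reachable 0 z}
      zero_mem' := SimpleGraph.Reachable.refl 0
      add_mem' := by
        intro a b ha hb
        have h2 := tonnReach_translate n k L a 0 b hb
        rw [zero_add] at h2
        rw [add_comm] at h2
        exact ha.trans h2
      neg_mem' := by
        intro a ha
        have := tonnReach_translate n k L (-a) 0 a ha
        simp only [zero_add, add_neg_cancel] at this
        exact this.symm }
  -- each L i (cast to ZMod n) is in S
  have hmem : ∀ i, ((L i : ℕ) : ZMod n) ∈ S := by
    intro i
    by_cases hz : ((L i : ℕ) : ZMod n) = 0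
    · rw [hz]; exact S.zero_mem
    · have hk2 : 2 ≤ k := by
        by_contra hlt
        have hk1 : k = 1 := by omega
        subst hk1
        have : ∑ j, L j = L i := by
          rw [Fin.sum_univ_one]
          congr 1
          exact Subsingleton.elim _ _
        rw [this] at hsum
        exact hz (by rw [hsum]; exact ZMod.natCast_self n)
      have := tonnAdj_step n k L i 0 hk2 hz
      have : G.Reachable 0 (0 + ((L i : ℕ) : ZMod n)) := this.reachable
      exact (by simpa using this : G.Reachable 0 ((L i : ℕ) : ZMod n))
  -- gcds of subsets are in S via Bezout
  have hgcd : ∀ s : Finset (Fin k), ((s.gcd L : ℕ) : ZMod n) ∈ S := by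
    intro s
    induction s using Finset.induction with
    | empty => simp [Finset.gcd_empty]
    | insert a s' h ih =>
      rw [Finset.gcd_insert]
      obtain ⟨g, hgdef⟩ : ∃ g, s'.gcd L = g := ⟨_, rfl⟩
      rw [hgdef] at ih ⊢
      have hgg : (gcd (L a) g : ℕ) = Nat.gcd (L a) g := rfl
      rw [hgg]
      set A := Nat.gcdA (L a) g with hA
      set B := Nat.gcdB (L a) g with hB
      have hb : ((Nat.gcd (L a) g : ℤ)) = (L a : ℤ) * A + (g : ℤ) * B :=
        Nat.gcd_eq_gcd_ab _ _
      have hcast : ((Nat.gcd (L a) g : ℕ) : ZMod n)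
          = A • ((L a : ℕ) : ZMod n) + B • ((g : ℕ) : ZMod n) := by
        have := congrArg (fun z : ℤ => (z : ZMod n)) hb
        push_cast at this
        rw [zsmul_eq_mul, zsmul_eq_mul]
        rw [this]
        ring
      rw [hcast]
      exact S.add_mem (S.zsmul_mem (hmem a) A) (S.zsmul_mem ih B)
  -- one is in S
  have hone : (1 : ZMod n) ∈ S := by
    have := hgcd Finset.univ
    rw [hred] at this
    simpa using this
  -- every element is in S
  have hall : ∀ z : ZMod n, G.Reachable 0 z := by
    intro z
    have hz : z.val • (1 : ZMod n) = z := by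
      rw [nsmul_eq_mul, mul_one, ZMod.natCast_val, ZMod.cast_id]
    have := S.nsmul_mem hone z.val
    rw [hz] at this
    exact this
  constructor
  intro u v
  exact (hall u).symm.trans (hall v)
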